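/- Let D ≥ 3 be an integer, g_c := D^D/(D+1)^{D+1}, and let G_LO : [0, g_c] → ℝ assign to each g the unique solution G ∈ [1, (D+1)/D] of G = 1 + g·G^{D+1}. Define the next-to-leading-order 2-point function for 0 < g < g_c by G_NLO(g) := (D(D+1)/2)·(Σ_{ℓ≥1} g^{2ℓ}·G_LO(g)^{2ℓ(D+1)+1}) / (1 − g·D·G_LO(g)^{D+1}). Then G_NLO(g) = (D(D+1)/2)·g²·G_LO(g)^{2D+2} / ((2 − G_LO(g))·(1 − g·D·G_LO(g)^{D+1})), and moreover G_NLO(g) = (D/2)·g²·(2 − G_LO(g))^{−1}·(d/dg)(G_LO(g)^{D+1}). -/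

import Mathlib

open Set

private lemma psi_hasDerivAt (D : ℕ) (x : ℝ) (hx : 0 < x) :
    HasDerivAt (fun G : ℝ => (G - 1) / G ^ (D + 1))
      (((D : ℝ) + 1 - D * x) / x ^ (D + 2)) x := by
  have h1 : HasDerivAt (fun G : ℝ => G - 1) 1 x := (hasDerivAt_id x).sub_const 1
  have h2 : HasDerivAt (fun G : ℝ => G ^ (D + 1)) (((D : ℝ) + 1) * x ^ D) x := by
    simpa using hasDerivAt_pow (D + 1) x
  have h3 := h1.div h2 (pow_ne_zero _ hx.ne')
  refine h3.congr_deriv ?_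
  have hxne : x ≠ 0 := hx.ne'
  rw [div_eq_div_iff (by positivity) (by positivity)]
  ring

set_option maxHeartbeats 1000000 in
theorem nlo_two_point_closed_form (D : ℕ) (hD : 3 ≤ D) (G_LO G_NLO : ℝ → ℝ)
    (hG : ∀ g ∈ Set.Icc (0 : ℝ) ((D : ℝ) ^ D / ((D : ℝ) + 1) ^ (D + 1)),
      G_LO g ∈ Set.Icc (1 : ℝ) (((D : ℝ) + 1) / D) ∧ G_LO g = 1 + g * (G_LO g) ^ (D + 1))
    (hN : ∀ g ∈ Set.Ioo (0 : ℝ) ((D : ℝ) ^ D / ((D : ℝ) + 1) ^ (D + 1)),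
      G_NLO g = ((D : ℝ) * ((D : ℝ) + 1) / 2) *
        (∑' ℓ : ℕ, g ^ (2 * (ℓ + 1)) * (G_LO g) ^ (2 * (ℓ + 1) * (D + 1) + 1)) /
        (1 - g * D * (G_LO g) ^ (D + 1))) :
    ∀ g ∈ Set.Ioo (0 : ℝ) ((D : ℝ) ^ D / ((D : ℝ) + 1) ^ (D + 1)),
      G_NLO g = ((D : ℝ) * ((D : ℝ) + 1) / 2) * g ^ 2 * (G_LO g) ^ (2 * D + 2) /
        ((2 - G_LO g) * (1 - g * D * (G_LO g) ^ (D + 1))) ∧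
      G_NLO g = ((D : ℝ) / 2) * g ^ 2 * (2 - G_LO g)⁻¹ *
        deriv (fun t => (G_LO t) ^ (D + 1)) g := by
  have hD3 : (3 : ℝ) ≤ (D : ℝ) := by exact_mod_cast hD
  have hDpos : (0 : ℝ) < D := by linarith
  have hD1pos : (0 : ℝ) < (D : ℝ) + 1 := by linarith
  set gc : ℝ := (D : ℝ) ^ D / ((D : ℝ) + 1) ^ (D + 1) with hgc
  set T : ℝ := ((D : ℝ) + 1) / D with hT
  set ψ : ℝ → ℝ := fun G => (G - 1) / G ^ (D + 1) with hψ
  have h1T : 1 < T := by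
    rw [hT, lt_div_iff₀ hDpos]; linarith
  have hT2 : T < 2 := by
    rw [hT, div_lt_iff₀ hDpos]; linarith
  -- ψ inverts G_LO on [0, gc]
  have hψval : ∀ x ∈ Icc (0 : ℝ) gc, ψ (G_LO x) = x := by
    intro x hx
    obtain ⟨⟨h1, _⟩, he⟩ := hG x hx
    have hp : (0 : ℝ) < G_LO x ^ (D + 1) := pow_pos (by linarith) _
    rw [hψ]
    field_simp
    linarith
  -- ψ at the top point equals gc
  have hψtop : ψ T = gc := by
    have hDne : (D : ℝ) ≠ 0 := hDpos.ne'
    have hD1ne : ((D : ℝ) + 1) ≠ 0 := hD1pos.ne'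
    have hp1 : ((D : ℝ) + 1) ^ (D + 1) ≠ 0 := pow_ne_zero _ hD1ne
    have hp2 : (D : ℝ) ^ (D + 1) ≠ 0 := pow_ne_zero _ hDne
    rw [hψ, hT, hgc]
    rw [show ((fun G : ℝ => (G - 1) / G ^ (D + 1)) (((D:ℝ) + 1) / ↑D)) = ((((D:ℝ)+1)/D - 1) / ((((D:ℝ)+1)/D) ^ (D+1))) from rfl, div_pow]
    field_simp
    ring
  -- strict monotonicity of ψ on [1, T]
  have hψcont : ContinuousOn ψ (Icc 1 T) := by
    apply ContinuousOn.div
    · fun_prop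
    · fun_prop
    · intro x hx
      exact pow_ne_zero _ (by have := hx.1; positivity)
  have hmono : StrictMonoOn ψ (Icc 1 T) := by
    apply strictMonoOn_of_deriv_pos (convex_Icc 1 T) hψcont
    intro x hx
    rw [interior_Icc] at hx
    have hx0 : 0 < x := lt_trans one_pos hx.1
    rw [(psi_hasDerivAt D x hx0).deriv]
    apply div_pos
    · have : x < T := hx.2
      rw [hT, lt_div_iff₀ hDpos] at this
      nlinarith
    · positivity
  -- membership of ψ on the interval
  have hmem : ∀ x ∈ Icc (1 : ℝ) T, ψ x ∈ Icc (0 : ℝ) gc := by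
    intro x hx
    constructor
    · rw [hψ]
      apply div_nonneg (by linarith [hx.1]) (pow_nonneg (by linarith [hx.1]) _)
    · rw [← hψtop]
      rcases eq_or_lt_of_le hx.2 with h | h
      · rw [h]
      · exact (hmono hx (right_mem_Icc.mpr h1T.le) h).le
  -- continuity of G_LO on [0, gc]
  haveI : CompactSpace (Icc (1 : ℝ) T) := isCompact_iff_compactSpace.mp isCompact_Icc
  have hGmem : ∀ y : Icc (0 : ℝ) gc, G_LO y ∈ Icc (1 : ℝ) T := fun y => (hG y y.2).1
  let E : Icc (1 : ℝ) T ≃ Icc (0 : ℝ) gc :=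
    { toFun := fun x => ⟨ψ x, hmem x x.2⟩
      invFun := fun y => ⟨G_LO y, hGmem y⟩
      left_inv := by
        intro x
        have h1 : ψ (G_LO (ψ x)) = ψ x := hψval (ψ x) (hmem x x.2)
        exact Subtype.ext (hmono.injOn (hGmem ⟨ψ x, hmem x x.2⟩) x.2 h1)
      right_inv := by
        intro y
        exact Subtype.ext (hψval y y.2) }
  have hEc : Continuous E := Continuous.subtype_mk hψcont.restrict _
  let H := hEc.homeoOfEquivCompactToT2
  have hGcont : ContinuousOn G_LO (Icc (0 : ℝ) gc) := by
    rw [continuousOn_iff_continuous_restrict]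
    exact continuous_subtype_val.comp H.symm.continuous
  -- now fix g
  intro g hg
  obtain ⟨hg0, hggc⟩ := hg
  have hgmem : g ∈ Icc (0 : ℝ) gc := ⟨hg0.le, hggc.le⟩
  obtain ⟨⟨hG1, hGle⟩, heq⟩ := hG g hgmem
  set G₀ := G_LO g with hG₀def
  have hG0pos : (0 : ℝ) < G₀ := by linarith
  have heq' : g * G₀ ^ (D + 1) = G₀ - 1 := by linarith
  -- strict upper bound
  have hGlt : G₀ < T := by
    rcases lt_or_eq_of_le hGle with h | h
    · exact h
    · exfalso
      have : g = gc := by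
        rw [← hψval g hgmem, ← hG₀def, h, hψtop]
      exact absurd this hggc.ne
  have hG2 : G₀ < 2 := hGlt.trans hT2
  have hDG : (D : ℝ) * G₀ < (D : ℝ) + 1 := by
    rw [hT, lt_div_iff₀ hDpos] at hGlt; nlinarith
  -- geometric series
  set r : ℝ := (G₀ - 1) ^ 2 with hr
  have hr0 : 0 ≤ r := sq_nonneg _
  have hr1 : r < 1 := by rw [hr]; nlinarith
  have hterm : ∀ ℓ : ℕ, g ^ (2 * (ℓ + 1)) * G₀ ^ (2 * (ℓ + 1) * (D + 1) + 1)
      = r ^ (ℓ + 1) * G₀ := by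
    intro ℓ
    have h1 : r ^ (ℓ + 1) = (g * G₀ ^ (D + 1)) ^ (2 * (ℓ + 1)) := by
      rw [hr, ← heq', ← pow_mul]
    rw [h1, mul_pow, ← pow_mul]
    have e : 2 * (ℓ + 1) * (D + 1) + 1 = (D + 1) * (2 * (ℓ + 1)) + 1 := by ring
    rw [e, pow_succ]
    exact (mul_assoc _ _ _).symm
  have hsum : (∑' ℓ : ℕ, g ^ (2 * (ℓ + 1)) * G₀ ^ (2 * (ℓ + 1) * (D + 1) + 1))
      = G₀ * (r * (1 - r)⁻¹) := by
    rw [tsum_congr hterm]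
    have h2 : ∀ ℓ : ℕ, r ^ (ℓ + 1) * G₀ = G₀ * r * r ^ ℓ := by
      intro ℓ; rw [pow_succ]; ring
    rw [tsum_congr h2, tsum_mul_left, tsum_geometric_of_lt_one hr0 hr1]
    ring
  -- derivative of G_LO
  have hGat : ContinuousAt G_LO g := hGcont.continuousAt (Icc_mem_nhds hg0 hggc)
  have hψd : HasDerivAt ψ (((D : ℝ) + 1 - D * G₀) / G₀ ^ (D + 2)) G₀ :=
    psi_hasDerivAt D G₀ hG0pos
  have hf'ne : ((D : ℝ) + 1 - D * G₀) / G₀ ^ (D + 2) ≠ 0 :=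
    div_ne_zero (by linarith) (pow_ne_zero _ hG0pos.ne')
  have hev : ∀ᶠ y in nhds g, ψ (G_LO y) = y :=
    Filter.eventually_of_mem (Icc_mem_nhds hg0 hggc) hψval
  have hGd : HasDerivAt G_LO ((((D : ℝ) + 1 - D * G₀) / G₀ ^ (D + 2)))⁻¹ g :=
    HasDerivAt.of_local_left_inverse hGat (hG₀def ▸ hψd) hf'ne hev
  have hpowd := hGd.pow (D + 1)
  have hderiv : deriv (fun t => G_LO t ^ (D + 1)) g
      = ((D : ℝ) + 1) * G₀ ^ D * ((((D : ℝ) + 1 - D * G₀) / G₀ ^ (D + 2)))⁻¹ := by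
    rw [show (fun t => G_LO t ^ (D + 1)) = G_LO ^ (D + 1) from rfl, hpowd.deriv]
    push_cast
    rfl
  -- algebra
  have hden : 1 - g * (D : ℝ) * G₀ ^ (D + 1) = (D : ℝ) + 1 - D * G₀ := by
    have h := heq'
    nlinarith [heq']
  have hg2 : g ^ 2 * G₀ ^ (2 * D + 2) = r := by
    have h1 : g ^ 2 * G₀ ^ (2 * D + 2) = (g * G₀ ^ (D + 1)) ^ 2 := by
      rw [mul_pow, ← pow_mul]
      congr 2
      omega
    rw [h1, heq', hr]
  have h1req : (1 : ℝ) - r = (2 - G₀) * G₀ := by rw [hr]; ring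
  have hNg := hN g ⟨hg0, hggc⟩
  rw [hsum, hden] at hNg
  have h2G : (0 : ℝ) < 2 - G₀ := by linarith
  have hdpos : (0 : ℝ) < (D : ℝ) + 1 - D * G₀ := by linarith
  have hne1 : (2 - G₀) ≠ 0 := h2G.ne'
  have hne2 : ((D : ℝ) + 1 - D * G₀) ≠ 0 := hdpos.ne'
  have hne3 : G₀ ≠ 0 := hG0pos.ne'
  have hne4 : G₀ ^ (D + 2) ≠ 0 := pow_ne_zero _ hne3
  clear hpowd hGd hev hψd hGat hGcont H hEc E hGmem hmem hmono hψcont hψtop hψval hψ hG hN this ψ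
  clear_value G₀ r
  constructor
  · rw [hNg, hden, h1req, ← hg2]
    field_simp
  · rw [hNg, hderiv, h1req, ← hg2, inv_div]
    field_simp
    ring
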